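/- Let S ⊆ ℂ be a finite set with at least two elements and let Γ_CI(S) be its clustering independent region. Then for every z ∈ ℂ with |z| > 1, one has z ∈ Γ_CI(S) if and only if 1/z ∈ Γ_CI(S); that is, the interior part of Γ_CI(S) is the image of the exterior part under complex inversion z ↦ 1/z. -/

import Mathlib

/-- For a finite `S ⊆ ℂ` with at least two elements and any `z ∈ ℂ`
with `|z| > 1`, `z` belongs to the clustering independent region `Γ_CI(S)` if and
only if `1/z` does: the interior part of `Γ_CI(S)` is the image of the exterior part
under complex inversion. -/
theorem clustering_independent_region_inversion (S : Finset ℂ) (hS : 2 ≤ S.card)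
    (ΔS : Finset ℂ)
    (hΔS : ΔS = (S ×ˢ S).image (fun p : ℂ × ℂ => p.1 - p.2))
    (dminS : ℝ)
    (hdminS : dminS = sInf {r : ℝ | ∃ x ∈ S, ∃ x' ∈ S, x ≠ x' ∧ r = ‖x - x'‖})
    (Γ : Set ℂ)
    (hΓ : Γ = {z : ℂ | ∀ d ∈ ΔS, ∀ d' ∈ ΔS, ¬(d = 0 ∧ d' = 0) →
      min dminS (‖z‖ * dminS) ≤ ‖d + z * d'‖})
    (z : ℂ) (hz : 1 < ‖z‖) :
    z ∈ Γ ↔ 1 / z ∈ Γ := by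
  subst hΓ
  have hz0 : z ≠ 0 := by
    intro h; rw [h] at hz; simp at hz; linarith
  have hzpos : (0:ℝ) < ‖z‖ := by linarith
  have hdnn : 0 ≤ dminS := by
    rw [hdminS]
    apply Real.sInf_nonneg
    rintro r ⟨x, _, x', _, _, rfl⟩
    exact norm_nonneg _
  have habs : ‖1/z‖ = 1 / ‖z‖ := by
    simp [map_div₀]
  have hmin1 : min dminS (‖z‖ * dminS) = dminS := by
    apply min_eq_left; nlinarith
  have hmin2 : min dminS (‖1/z‖ * dminS) = ‖1/z‖ * dminS := by
    apply min_eq_right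
    rw [habs]
    have h1 : 1 / ‖z‖ ≤ 1 := by
      rw [div_le_one hzpos]; linarith
    nlinarith
  have key : ∀ d d' : ℂ, ‖d + 1/z * d'‖
      = ‖d' + z * d‖ / ‖z‖ := by
    intro d d'
    rw [eq_div_iff (ne_of_gt hzpos), ← norm_mul]
    congr 1
    field_simp
    ring
  simp only [Set.mem_setOf_eq, hmin1, hmin2]
  constructor
  · intro h d hd d' hd' hne
    have hh := h d' hd' d hd (by tauto)
    rw [habs, key, one_div, inv_mul_eq_div]
    gcongr
  · intro h d hd d' hd' hne
    have hh := h d' hd' d hd (by tauto)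
    rw [habs, key, one_div, inv_mul_eq_div, div_le_div_iff₀ hzpos hzpos] at hh
    nlinarith [norm_nonneg (d + z * d'), hh]
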